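/- Let κ₁>0, κ₋₁≥0, K>0, z_V>0, and let z_C⁻(K,z_V) = ((z_V+K)κ₁ + κ₋₁ − √D(K,z_V))/(2κ₁) with D(K,z_V) = ((z_V+K)κ₁ + κ₋₁)² − 4κ₁²z_V K. Then 0 ≤ z_C⁻(K,z_V) ≤ min(z_V, K). -/
import Mathlib


theorem stable_root_bounds
    (κ1 κm1 K zV : ℝ) (hκ1 : 0 < κ1) (hκm1 : 0 ≤ κm1) (hK : 0 < K) (hzV : 0 < zV) :
    let D := ((zV + K) * κ1 + κm1) ^ 2 - 4 * κ1 ^ 2 * zV * K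
    let zCm := ((zV + K) * κ1 + κm1 - Real.sqrt D) / (2 * κ1)
    0 ≤ zCm ∧ zCm ≤ min zV K := by
  intro D zCm
  set A := (zV + K) * κ1 + κm1 with hA
  set B := |zV - K| * κ1 + κm1 with hB
  have hBnn : 0 ≤ B := by positivity
  have hAnn : 0 ≤ A := by positivity
  have habs : |zV - K| ≤ zV + K := by
    rw [abs_le]; constructor <;> nlinarith
  have hDB : B ^ 2 ≤ D := by
    have h2 : |zV - K| ^ 2 = (zV - K) ^ 2 := sq_abs _
    simp only [hB, D]
    nlinarith [mul_nonneg (mul_nonneg hκm1 hκ1.le) (sub_nonneg.2 habs)]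
  have hDA : D ≤ A ^ 2 := by
    simp only [D]
    nlinarith [sq_nonneg κ1, mul_pos hzV hK]
  have hsB : B ≤ Real.sqrt D := by
    have := Real.sqrt_le_sqrt hDB
    rwa [Real.sqrt_sq hBnn] at this
  have hsA : Real.sqrt D ≤ A := by
    have := Real.sqrt_le_sqrt hDA
    rwa [Real.sqrt_sq hAnn] at this
  constructor
  · apply div_nonneg _ (by linarith)
    linarith
  · rw [div_le_iff₀ (by linarith)]
    rcases le_total zV K with h | h
    · rw [min_eq_left h]
      have : |zV - K| = K - zV := by rw [abs_sub_comm]; exact abs_of_nonneg (by linarith)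
      simp only [hB, this] at hsB
      nlinarith
    · rw [min_eq_right h]
      have : |zV - K| = zV - K := abs_of_nonneg (by linarith)
      simp only [hB, this] at hsB
      nlinarith
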